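/- arXiv:math/0002171 — 3 statements merged into one kernel-verified Lean document; each statement's English description precedes it below -/
import Mathlib

section
/- If x > 0 then e^{−x}/(1 − e^{−x})² < 1/x², and if 0 < x ≤ 1 then e^{−x}/(1 − e^{−x})² > 1/x² − 2. -/
open Real

theorem stmt_7 (x : ℝ) (hx : 0 < x) :
    Real.exp (-x) / (1 - Real.exp (-x)) ^ 2 < 1 / x ^ 2 ∧
      (x ≤ 1 → 1 / x ^ 2 - 2 < Real.exp (-x) / (1 - Real.exp (-x)) ^ 2) := by
  set s : ℝ := 2 * Real.sinh (x / 2) with hs_def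
  have hsinh : x / 2 < Real.sinh (x / 2) := Real.self_lt_sinh_iff.2 (by linarith)
  have hxs : x < s := by rw [hs_def]; linarith
  have hspos : 0 < s := lt_trans hx hxs
  have hsq : x ^ 2 < s ^ 2 := by nlinarith
  have key : Real.exp (-x) / (1 - Real.exp (-x)) ^ 2 = 1 / s ^ 2 := by
    have h1 : Real.sinh (x / 2) = (Real.exp (x / 2) - Real.exp (-(x / 2))) / 2 :=
      Real.sinh_eq _
    have h2 : Real.exp (x / 2) * Real.exp (-(x / 2)) = 1 := by
      rw [← Real.exp_add]; norm_num
    have h3 : Real.exp (x / 2) * Real.exp (x / 2) = Real.exp x := by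
      rw [← Real.exp_add]; ring_nf
    have h4 : Real.exp (-(x / 2)) * Real.exp (-(x / 2)) = Real.exp (-x) := by
      rw [← Real.exp_add]; ring_nf
    have h5 : Real.exp x * Real.exp (-x) = 1 := by rw [← Real.exp_add]; norm_num
    have hlt : Real.exp (-x) < 1 := by
      rw [Real.exp_lt_one_iff]; linarith
    have hpos : 0 < 1 - Real.exp (-x) := by linarith
    have hne : (1 - Real.exp (-x)) ^ 2 ≠ 0 := pow_ne_zero _ (ne_of_gt hpos)
    have hsne : s ^ 2 ≠ 0 := by positivity
    field_simp
    rw [hs_def, h1]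
    nlinarith [h2, h3, h4, h5]
  constructor
  · rw [key]
    exact one_div_lt_one_div_of_lt (by positivity) hsq
  · intro hx1
    rw [key]
    -- bound s^2 ≤ x^2 + 2 x^4 via exp bounds
    have habs : |x| ≤ 1 := by rw [abs_of_pos hx]; exact hx1
    have habs' : |(-x)| ≤ 1 := by rwa [abs_neg]
    have hb1 := Real.exp_bound habs (n := 4) (by norm_num)
    have hb2 := Real.exp_bound habs' (n := 4) (by norm_num)
    have hsum1 : ∑ m ∈ Finset.range 4, x ^ m / (Nat.factorial m) =
        1 + x + x ^ 2 / 2 + x ^ 3 / 6 := by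
      simp [Finset.sum_range_succ, Nat.factorial]
    have hsum2 : ∑ m ∈ Finset.range 4, (-x) ^ m / (Nat.factorial m) =
        1 - x + x ^ 2 / 2 - x ^ 3 / 6 := by
      simp [Finset.sum_range_succ, Nat.factorial]; ring
    rw [hsum1] at hb1
    rw [hsum2, abs_neg, abs_of_pos hx] at hb2
    have he1 : Real.exp x ≤ 1 + x + x ^ 2 / 2 + x ^ 3 / 6 + x ^ 4 * (5 / 96) := by
      have := (abs_sub_le_iff.1 hb1).1
      rw [abs_of_pos hx] at this
      norm_num [Nat.factorial] at this ⊢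
      linarith
    have he2 : Real.exp (-x) ≤ 1 - x + x ^ 2 / 2 - x ^ 3 / 6 + x ^ 4 * (5 / 96) := by
      have := (abs_sub_le_iff.1 hb2).1
      norm_num [Nat.factorial] at this ⊢
      linarith
    have hsbound : s ^ 2 ≤ x ^ 2 + 2 * x ^ 4 := by
      have hcosh : Real.cosh x = (Real.exp x + Real.exp (-x)) / 2 := Real.cosh_eq x
      have h2m : Real.cosh x = 2 * Real.sinh (x / 2) ^ 2 + 1 := by
        have := Real.cosh_two_mul (x / 2)
        have hc2 := Real.cosh_sq (x / 2)
        rw [show 2 * (x / 2) = x by ring] at this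
        rw [this, hc2]; ring
      have : s ^ 2 = 2 * (Real.cosh x - 1) := by rw [hs_def, h2m]; ring
      rw [this, hcosh]
      nlinarith [pow_le_one₀ (le_of_lt hx) hx1 (n := 4), pow_pos hx 4]
    rw [sub_lt_iff_lt_add, div_add' _ _ _ (by positivity), div_lt_div_iff₀ (by positivity) (by positivity)]
    nlinarith [mul_pos (pow_pos hx 2) (pow_pos hspos 2), sq_nonneg x]
end

section
/- Let m, ℓ be positive integers, let ϑ > −1 be a real number, let c_0 = π√(2ℓ/(3m)) and c_1 = √(1+ϑ)·c_0, and let r be an integer with 1 ≤ r ≤ m. Then for every positive integer n, Σ_{k=1}^{∞} m·e^{−c_1 k (r+m)/(2√n)} / (1 − e^{−c_1 k m/(2√n)})² < n/((1+ϑ)ℓ). -/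
open Real

-- key: for t > 0, exp(-t)/(1-exp(-t))^2 < 1/t^2
lemma key_ineq {t : ℝ} (ht : 0 < t) :
    Real.exp (-t) / (1 - Real.exp (-t)) ^ 2 < 1 / t ^ 2 := by
  have h1 : Real.exp (-t) < 1 := by
    rw [Real.exp_lt_one_iff]; linarith
  have hpos : 0 < 1 - Real.exp (-t) := by linarith
  rw [div_lt_div_iff₀ (by positivity) (by positivity)]
  have hsinh := (Real.self_lt_sinh_iff (x := t/2)).mpr (by linarith)
  rw [Real.sinh_eq] at hsinh
  have h2 : t * Real.exp (-(t/2)) < 1 - Real.exp (-t) := by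
    have := mul_lt_mul_of_pos_left hsinh (Real.exp_pos (-(t/2)))
    have he : Real.exp (-(t/2)) * (Real.exp (t/2) - Real.exp (-(t/2))) / 2 * 2
        = 1 - Real.exp (-t) := by
      rw [mul_sub, ← Real.exp_add, ← Real.exp_add]
      norm_num; ring_nf
    nlinarith [Real.exp_pos (-(t/2))]
  have h3 : Real.exp (-t) = Real.exp (-(t/2)) * Real.exp (-(t/2)) := by
    rw [← Real.exp_add]; ring_nf
  nlinarith [Real.exp_pos (-(t/2)), mul_pos ht (Real.exp_pos (-(t/2)))]

theorem stmt_13 (m ℓ : ℕ) (hm : 0 < m) (hℓ : 0 < ℓ)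
    (ϑ : ℝ) (hϑ : -1 < ϑ) (c₀ c₁ : ℝ)
    (hc₀ : c₀ = π * Real.sqrt (2 * ℓ / (3 * m)))
    (hc₁ : c₁ = Real.sqrt (1 + ϑ) * c₀)
    (r : ℕ) (hr1 : 1 ≤ r) (hrm : r ≤ m) (n : ℕ) (hn : 0 < n) :
    (∑' k : ℕ,
        (m : ℝ) * Real.exp (-(c₁ * (k + 1) * (r + m)) / (2 * Real.sqrt n)) /
          (1 - Real.exp (-(c₁ * (k + 1) * m) / (2 * Real.sqrt n))) ^ 2) <
      (n : ℝ) / ((1 + ϑ) * ℓ) := by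
  have hmR : (0:ℝ) < m := by exact_mod_cast hm
  have hℓR : (0:ℝ) < ℓ := by exact_mod_cast hℓ
  have hnR : (0:ℝ) < n := by exact_mod_cast hn
  have hϑ' : (0:ℝ) < 1 + ϑ := by linarith
  have hc₀pos : 0 < c₀ := by
    rw [hc₀]; positivity
  have hc₁pos : 0 < c₁ := by
    rw [hc₁]
    exact mul_pos (Real.sqrt_pos.mpr hϑ') hc₀pos
  have hs : 0 < Real.sqrt n := Real.sqrt_pos.mpr hnR
  set f : ℕ → ℝ := fun k =>
    (m : ℝ) * Real.exp (-(c₁ * (k + 1) * (r + m)) / (2 * Real.sqrt n)) /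
      (1 - Real.exp (-(c₁ * (k + 1) * m) / (2 * Real.sqrt n))) ^ 2 with hf
  set C : ℝ := 4 * n / (c₁ ^ 2 * m) with hC
  set g : ℕ → ℝ := fun k => C * (1 / ((k:ℝ) + 1) ^ 2) with hg
  -- t k
  have htpos : ∀ k : ℕ, 0 < c₁ * ((k:ℝ) + 1) * m / (2 * Real.sqrt n) := by
    intro k; positivity
  have hfg : ∀ k : ℕ, f k < g k := by
    intro k
    set t : ℝ := c₁ * ((k:ℝ) + 1) * m / (2 * Real.sqrt n) with hT
    have ht : 0 < t := htpos k
    have h1 : Real.exp (-(c₁ * (k + 1) * (r + m)) / (2 * Real.sqrt n))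
        ≤ Real.exp (-t) := by
      apply Real.exp_le_exp.mpr
      rw [hT, neg_div, neg_le_neg_iff, div_le_div_iff₀ (by positivity) (by positivity)]
      have hrm' : (m:ℝ) ≤ (r:ℝ) + m := by
        have : (1:ℝ) ≤ r := by exact_mod_cast hr1
        linarith
      have hh := mul_le_mul_of_nonneg_right
        (mul_le_mul_of_nonneg_left hrm' (by positivity : (0:ℝ) ≤ c₁ * ((k:ℝ)+1)))
        (by positivity : (0:ℝ) ≤ 2 * Real.sqrt n)
      nlinarith [hh]
    have hkey := key_ineq ht
    have hd : (1 - Real.exp (-(c₁ * (k + 1) * m) / (2 * Real.sqrt n))) ^ 2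
        = (1 - Real.exp (-t)) ^ 2 := by
      rw [hT]; ring_nf
    have hdp : 0 < (1 - Real.exp (-t)) ^ 2 := by
      have h2 : Real.exp (-t) < 1 := by rw [Real.exp_lt_one_iff]; linarith
      have h3 : 0 < 1 - Real.exp (-t) := by linarith
      exact pow_pos h3 2
    have step1 : f k ≤ (m : ℝ) * (Real.exp (-t) / (1 - Real.exp (-t)) ^ 2) := by
      rw [hf]; simp only []
      rw [hd, mul_div_assoc]
      gcongr
    have step2 : (m : ℝ) * (Real.exp (-t) / (1 - Real.exp (-t)) ^ 2)
        < (m : ℝ) * (1 / t ^ 2) := by gcongr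
    have step3 : (m : ℝ) * (1 / t ^ 2) = g k := by
      have hsq : Real.sqrt n ^ 2 = n := Real.sq_sqrt hnR.le
      have ht2 : t ^ 2 = c₁ ^ 2 * ((k:ℝ) + 1) ^ 2 * (m:ℝ) ^ 2 / (4 * n) := by
        rw [hT, div_pow, mul_pow 2 (Real.sqrt n) 2, hsq]; ring
      rw [hg, hC, ht2]
      field_simp
    linarith
  have hgsum : HasSum g (C * (π ^ 2 / 6)) := by
    have h0 : HasSum (fun n : ℕ => (1:ℝ) / ((n:ℝ)) ^ 2) (π ^ 2 / 6) := hasSum_zeta_two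
    have h1 : HasSum (fun k : ℕ => (1:ℝ) / ((k:ℝ) + 1) ^ 2) (π ^ 2 / 6) := by
      have h2 := (hasSum_nat_add_iff' (f := fun n : ℕ => (1:ℝ) / ((n:ℝ)) ^ 2) 1).mpr h0
      norm_num at h2
      convert h2 using 2 with k
      case e'_3 => rfl
      case e'_5 => push_cast; ring
    simpa [hg] using h1.mul_left C
  have hfnn : ∀ k, 0 ≤ f k := by
    intro k
    rw [hf]
    positivity
  have hfsum : Summable f :=
    Summable.of_nonneg_of_le hfnn (fun k => (hfg k).le) hgsum.summable
  have hlt : ∑' k, f k < ∑' k, g k :=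
    Summable.tsum_lt_tsum (i := 0) (fun k => (hfg k).le) (hfg 0) hfsum hgsum.summable
  have hgval : ∑' k, g k = (n : ℝ) / ((1 + ϑ) * ℓ) := by
    have h1 : Real.sqrt (1 + ϑ) ^ 2 = 1 + ϑ := Real.sq_sqrt hϑ'.le
    have h2 : Real.sqrt (2 * ℓ / (3 * m)) ^ 2 = 2 * (ℓ:ℝ) / (3 * m) := by
      apply Real.sq_sqrt; positivity
    have hc₁sq : c₁ ^ 2 = (1 + ϑ) * π ^ 2 * (2 * (ℓ:ℝ) / (3 * m)) := by
      rw [hc₁, hc₀, mul_pow, mul_pow, h1, h2]; ring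
    have hπ : (0:ℝ) < π := Real.pi_pos
    rw [hgsum.tsum_eq, hC, hc₁sq]
    field_simp
    ring
  rw [← hgval]
  exact hlt
end

section
/- Let A be a set of positive integers, and let c_1 and N_0 be positive real numbers. Then there is a constant C such that for every integer n ≥ 2N_0, 0 < Σ_{k,a : ka > n − N_0} a·e^{−c_1 k a/(2√n)} ≤ C/√n, where the sum is over all positive integers k and all a ∈ A with ka > n − N_0. -/
open Real

lemma aux_xexp {x : ℝ} (hx : 0 ≤ x) : x * Real.exp (-x) ≤ 1 := by
  have h1 : Real.exp (-x) * Real.exp x = 1 := by rw [← Real.exp_add]; simp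
  have h2 : x + 1 ≤ Real.exp x := Real.add_one_le_exp x
  have h3 : 0 < Real.exp (-x) := Real.exp_pos _
  nlinarith

lemma aux_pointwise {t : ℝ} (ht : 0 < t) {k a m0 : ℝ} (hk : 1 ≤ k) (ha : 1 ≤ a)
    (hm : m0 ≤ k * a) :
    a * Real.exp (-(t * (k * a))) ≤
      (4 / t) * Real.exp (t / 4) * Real.exp (-(t / 2 * m0)) *
        (Real.exp (-(t / 4 * k)) * Real.exp (-(t / 4 * a))) := by
  have e1 : Real.exp (-(t * (k * a))) =
      Real.exp (-(t / 4 * (k * a))) * Real.exp (-(t / 4 * (k * a))) *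
        Real.exp (-(t / 2 * (k * a))) := by
    rw [← Real.exp_add, ← Real.exp_add]; ring_nf
  have h1 : a * Real.exp (-(t / 4 * (k * a))) ≤ 4 / t := by
    have hmono : Real.exp (-(t / 4 * (k * a))) ≤ Real.exp (-(t / 4 * a)) := by
      apply Real.exp_le_exp.mpr
      nlinarith [mul_nonneg (mul_nonneg ht.le (by linarith : (0:ℝ) ≤ a)) (sub_nonneg.mpr hk)]
    have hx : (t / 4 * a) * Real.exp (-(t / 4 * a)) ≤ 1 := aux_xexp (by positivity)
    have he := Real.exp_pos (-(t / 4 * a))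
    calc a * Real.exp (-(t / 4 * (k * a))) ≤ a * Real.exp (-(t / 4 * a)) := by
          apply mul_le_mul_of_nonneg_left hmono (by linarith)
      _ ≤ 4 / t := by
          rw [le_div_iff₀ ht]; nlinarith
  have h2 : Real.exp (-(t / 4 * (k * a))) ≤
      Real.exp (t / 4) * (Real.exp (-(t / 4 * k)) * Real.exp (-(t / 4 * a))) := by
    rw [← Real.exp_add, ← Real.exp_add]
    apply Real.exp_le_exp.mpr
    nlinarith [mul_nonneg (mul_nonneg ht.le (sub_nonneg.mpr hk)) (sub_nonneg.mpr ha)]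
  have h3 : Real.exp (-(t / 2 * (k * a))) ≤ Real.exp (-(t / 2 * m0)) := by
    apply Real.exp_le_exp.mpr; nlinarith
  calc a * Real.exp (-(t * (k * a)))
      = (a * Real.exp (-(t / 4 * (k * a)))) * Real.exp (-(t / 4 * (k * a))) *
          Real.exp (-(t / 2 * (k * a))) := by rw [e1]; ring
    _ ≤ (4 / t) * (Real.exp (t / 4) * (Real.exp (-(t / 4 * k)) * Real.exp (-(t / 4 * a)))) *
          Real.exp (-(t / 2 * m0)) := by
        apply mul_le_mul
        · apply mul_le_mul h1 h2 (Real.exp_pos _).le (by positivity)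
        · exact h3
        · exact (Real.exp_pos _).le
        · positivity
    _ = (4 / t) * Real.exp (t / 4) * Real.exp (-(t / 2 * m0)) *
          (Real.exp (-(t / 4 * k)) * Real.exp (-(t / 4 * a))) := by ring

set_option maxHeartbeats 1000000 in
theorem stmt_14 (A : Set ℕ) (hA : A.Nonempty) (hpos : ∀ a ∈ A, 0 < a)
    (c₁ N₀ : ℝ) (hc₁ : 0 < c₁) (hN₀ : 0 < N₀) :
    ∃ C : ℝ, ∀ n : ℕ, 2 * N₀ ≤ (n : ℝ) →
      0 < (∑' p : {p : ℕ × ℕ // 0 < p.1 ∧ p.2 ∈ A ∧ (n : ℝ) - N₀ < (p.1 * p.2 : ℕ)},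
            ((p : ℕ × ℕ).2 : ℝ) *
              Real.exp (-(c₁ * (p : ℕ × ℕ).1 * (p : ℕ × ℕ).2) / (2 * Real.sqrt n))) ∧
        (∑' p : {p : ℕ × ℕ // 0 < p.1 ∧ p.2 ∈ A ∧ (n : ℝ) - N₀ < (p.1 * p.2 : ℕ)},
            ((p : ℕ × ℕ).2 : ℝ) *
              Real.exp (-(c₁ * (p : ℕ × ℕ).1 * (p : ℕ × ℕ).2) / (2 * Real.sqrt n))) ≤
          C / Real.sqrt n := by
  obtain ⟨a₀, ha₀⟩ := hA
  refine ⟨2 ^ 29 * Real.exp (3 * c₁ / 8) / c₁ ^ 7, ?_⟩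
  intro n hn
  have hnpos : 0 < (n : ℝ) := by linarith
  have hn0 : 0 < n := by exact_mod_cast hnpos
  have hn1 : (1 : ℝ) ≤ n := by exact_mod_cast hn0
  have hs1 : 1 ≤ Real.sqrt n := Real.one_le_sqrt.mpr hn1
  set s := Real.sqrt (n : ℝ) with hsdef
  have hs0 : 0 < s := lt_of_lt_of_le one_pos hs1
  have hss : s * s = n := Real.mul_self_sqrt hnpos.le
  set t := c₁ / (2 * s) with htdef
  have ht : 0 < t := by positivity
  set u := t / 4 with hudef
  have hu0 : 0 < u := by positivity
  have hu : u = c₁ / (8 * s) := by rw [hudef, htdef, div_div]; congr 1; ring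
  set r := Real.exp (-u) with hrdef
  have hr0 : 0 < r := Real.exp_pos _
  have hr1 : r < 1 := by rw [hrdef]; exact Real.exp_lt_one_iff.mpr (by linarith)
  set D := 4 / t * Real.exp (t / 4) * Real.exp (-(c₁ * s / 8)) with hD
  have hD0 : 0 ≤ D := by positivity
  clear_value D r u t s
  -- the geometric base function on ℕ × ℕ
  have hgeo : Summable (fun m : ℕ => r ^ m) := summable_geometric_of_lt_one hr0.le hr1
  have hbase : Summable (fun p : ℕ × ℕ => r ^ p.1 * r ^ p.2) :=
    hgeo.mul_of_nonneg hgeo (fun _ => by positivity) (fun _ => by positivity)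
  have hexp : ∀ m : ℕ, Real.exp (-(t / 4 * (m : ℝ))) = r ^ m := by
    intro m
    rw [hrdef, ← Real.exp_nat_mul]
    congr 1
    rw [← hudef]; ring
  -- pointwise bound
  have hFG : ∀ p : {p : ℕ × ℕ // 0 < p.1 ∧ p.2 ∈ A ∧ (n : ℝ) - N₀ < (p.1 * p.2 : ℕ)},
      ((p : ℕ × ℕ).2 : ℝ) * Real.exp (-(c₁ * (p : ℕ × ℕ).1 * (p : ℕ × ℕ).2) / (2 * s)) ≤
        D * (r ^ (p : ℕ × ℕ).1 * r ^ (p : ℕ × ℕ).2) := by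
    rintro ⟨⟨k, a⟩, hk, haA, hka⟩
    have hk1 : (1 : ℝ) ≤ k := by exact_mod_cast hk
    have ha1 : (1 : ℝ) ≤ a := by exact_mod_cast hpos a haA
    have hka' : (n : ℝ) - N₀ < (k : ℝ) * a := by
      push_cast at hka; exact hka
    have hm : s * s / 2 ≤ (k : ℝ) * a := by rw [hss]; linarith
    have harg : -(c₁ * (k : ℝ) * a) / (2 * s) = -(t * ((k : ℝ) * a)) := by
      rw [htdef]; field_simp
    have key := aux_pointwise ht hk1 ha1 hm
    have harg2 : t / 2 * (s * s / 2) = c₁ * s / 8 := by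
      rw [htdef]; field_simp; ring
    simp only [harg2] at key
    calc ((a : ℝ)) * Real.exp (-(c₁ * (k : ℝ) * a) / (2 * s))
        = (a : ℝ) * Real.exp (-(t * ((k : ℝ) * a))) := by rw [harg]
      _ ≤ 4 / t * Real.exp (t / 4) * Real.exp (-(c₁ * s / 8)) *
            (Real.exp (-(t / 4 * (k : ℝ))) * Real.exp (-(t / 4 * (a : ℝ)))) := key
      _ = D * (r ^ k * r ^ a) := by rw [hexp k, hexp a, hD]
  have hF0 : ∀ p : {p : ℕ × ℕ // 0 < p.1 ∧ p.2 ∈ A ∧ (n : ℝ) - N₀ < (p.1 * p.2 : ℕ)},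
      0 ≤ ((p : ℕ × ℕ).2 : ℝ) *
        Real.exp (-(c₁ * (p : ℕ × ℕ).1 * (p : ℕ × ℕ).2) / (2 * s)) := by
    intro p; positivity
  have hGsum : Summable (fun p : {p : ℕ × ℕ // 0 < p.1 ∧ p.2 ∈ A ∧ (n : ℝ) - N₀ < (p.1 * p.2 : ℕ)}
      => D * (r ^ (p : ℕ × ℕ).1 * r ^ (p : ℕ × ℕ).2)) := by
    exact (hbase.subtype _).mul_left D
  have hFsum : Summable (fun p : {p : ℕ × ℕ // 0 < p.1 ∧ p.2 ∈ A ∧ (n : ℝ) - N₀ < (p.1 * p.2 : ℕ)}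
      => ((p : ℕ × ℕ).2 : ℝ) *
        Real.exp (-(c₁ * (p : ℕ × ℕ).1 * (p : ℕ × ℕ).2) / (2 * s))) :=
    Summable.of_nonneg_of_le hF0 hFG hGsum
  constructor
  · -- positivity
    have hwit : (n : ℝ) - N₀ < ((n * a₀ : ℕ) : ℝ) := by
      have ha1 : (1 : ℝ) ≤ a₀ := by exact_mod_cast hpos a₀ ha₀
      push_cast
      nlinarith
    refine Summable.tsum_pos hFsum hF0 ⟨(n, a₀), hn0, ha₀, hwit⟩ ?_
    have ha0 : (0 : ℝ) < a₀ := by exact_mod_cast hpos a₀ ha₀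
    exact mul_pos ha0 (Real.exp_pos _)
  · -- upper bound
    have hsubsum : Summable (fun p : {p : ℕ × ℕ // 0 < p.1 ∧ p.2 ∈ A ∧ (n : ℝ) - N₀ < (p.1 * p.2 : ℕ)}
        => r ^ (p : ℕ × ℕ).1 * r ^ (p : ℕ × ℕ).2) := hbase.subtype _
    have hsub_le : (∑' p : {p : ℕ × ℕ // 0 < p.1 ∧ p.2 ∈ A ∧ (n : ℝ) - N₀ < (p.1 * p.2 : ℕ)},
        r ^ (p : ℕ × ℕ).1 * r ^ (p : ℕ × ℕ).2) ≤ ∑' p : ℕ × ℕ, r ^ p.1 * r ^ p.2 :=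
      Summable.tsum_le_tsum_of_inj Subtype.val Subtype.val_injective
        (fun c _ => by positivity) (fun i => le_rfl) hsubsum hbase
    have hprod : (∑' p : ℕ × ℕ, r ^ p.1 * r ^ p.2) = (1 - r)⁻¹ * (1 - r)⁻¹ := by
      have h2 : (∑' p : ℕ × ℕ, r ^ p.1 * r ^ p.2) = ∑' (b : ℕ), ∑' (c : ℕ), r ^ b * r ^ c :=
        Summable.tsum_prod' (f := fun p : ℕ × ℕ => r ^ p.1 * r ^ p.2) hbase (fun b => hgeo.mul_left (r ^ b))
      rw [h2]
      simp_rw [tsum_mul_left, tsum_geometric_of_lt_one hr0.le hr1, tsum_mul_right,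
        tsum_geometric_of_lt_one hr0.le hr1]
    have hinv : (1 - r)⁻¹ ≤ Real.exp u / u := by
      have h1 : 0 < 1 - r := by linarith
      have h2 : (1 - r) * Real.exp u = Real.exp u - 1 := by
        rw [hrdef, sub_mul, one_mul, ← Real.exp_add]; simp
      have h3 : u + 1 ≤ Real.exp u := Real.add_one_le_exp u
      have h4 : u / Real.exp u ≤ 1 - r := by
        rw [div_le_iff₀ (Real.exp_pos _)]; linarith
      calc (1 - r)⁻¹ ≤ (u / Real.exp u)⁻¹ := by
            apply inv_anti₀ (by positivity) h4
        _ = Real.exp u / u := by rw [inv_div]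
      -- done
    have hfinal : D * ((1 - r)⁻¹ * (1 - r)⁻¹) ≤ 2 ^ 29 * Real.exp (3 * c₁ / 8) / c₁ ^ 7 / s := by
      have step1 : D * ((1 - r)⁻¹ * (1 - r)⁻¹) ≤ D * (Real.exp u / u * (Real.exp u / u)) := by
        have h1 : 0 < 1 - r := by linarith
        apply mul_le_mul_of_nonneg_left _ hD0
        apply mul_le_mul hinv hinv (by positivity) (by positivity)
      have step2 : D * (Real.exp u / u * (Real.exp u / u)) =
          (8 * s / c₁) ^ 3 * (Real.exp u) ^ 3 * Real.exp (-(c₁ * s / 8)) := by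
        rw [hD, ← hudef, htdef, hu]
        field_simp
        ring
      have hup : Real.exp u ≤ Real.exp (c₁ / 8) := by
        apply Real.exp_le_exp.mpr
        rw [hu, div_le_div_iff₀ (by positivity) (by norm_num)]
        nlinarith
      have hp4 : (c₁ * s / 32) ^ 4 ≤ Real.exp (c₁ * s / 8) := by
        have h1 : c₁ * s / 32 ≤ Real.exp (c₁ * s / 32) := by
          linarith [Real.add_one_le_exp (c₁ * s / 32)]
        calc (c₁ * s / 32) ^ 4 ≤ (Real.exp (c₁ * s / 32)) ^ 4 :=
              pow_le_pow_left₀ (by positivity) h1 4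
          _ = Real.exp ((4 : ℕ) * (c₁ * s / 32)) := (Real.exp_nat_mul _ 4).symm
          _ = Real.exp (c₁ * s / 8) := by congr 1; push_cast; ring
      have hdown : Real.exp (-(c₁ * s / 8)) ≤ ((c₁ * s / 32) ^ 4)⁻¹ := by
        rw [Real.exp_neg]
        exact inv_anti₀ (by positivity) hp4
      have step3 : (8 * s / c₁) ^ 3 * (Real.exp u) ^ 3 * Real.exp (-(c₁ * s / 8)) ≤
          (8 * s / c₁) ^ 3 * (Real.exp (c₁ / 8)) ^ 3 * ((c₁ * s / 32) ^ 4)⁻¹ := by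
        apply mul_le_mul
        · apply mul_le_mul_of_nonneg_left _ (by positivity)
          exact pow_le_pow_left₀ (Real.exp_pos _).le hup 3
        · exact hdown
        · exact (Real.exp_pos _).le
        · positivity
      have step4 : (8 * s / c₁) ^ 3 * (Real.exp (c₁ / 8)) ^ 3 * ((c₁ * s / 32) ^ 4)⁻¹ =
          2 ^ 29 * Real.exp (3 * c₁ / 8) / c₁ ^ 7 / s := by
        have hex : (Real.exp (c₁ / 8)) ^ 3 = Real.exp (3 * c₁ / 8) := by
          rw [← Real.exp_nat_mul]; congr 1; push_cast; ring
        rw [hex]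
        field_simp
        ring
      linarith [step2 ▸ step1, step4 ▸ step3]
    calc (∑' p : {p : ℕ × ℕ // 0 < p.1 ∧ p.2 ∈ A ∧ (n : ℝ) - N₀ < (p.1 * p.2 : ℕ)},
            ((p : ℕ × ℕ).2 : ℝ) *
              Real.exp (-(c₁ * (p : ℕ × ℕ).1 * (p : ℕ × ℕ).2) / (2 * s)))
        ≤ ∑' p : {p : ℕ × ℕ // 0 < p.1 ∧ p.2 ∈ A ∧ (n : ℝ) - N₀ < (p.1 * p.2 : ℕ)},
            D * (r ^ (p : ℕ × ℕ).1 * r ^ (p : ℕ × ℕ).2) := Summable.tsum_le_tsum hFG hFsum hGsum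
      _ = D * ∑' p : {p : ℕ × ℕ // 0 < p.1 ∧ p.2 ∈ A ∧ (n : ℝ) - N₀ < (p.1 * p.2 : ℕ)},
            (r ^ (p : ℕ × ℕ).1 * r ^ (p : ℕ × ℕ).2) := tsum_mul_left
      _ ≤ D * ((1 - r)⁻¹ * (1 - r)⁻¹) := by
          rw [← hprod]
          exact mul_le_mul_of_nonneg_left hsub_le hD0
      _ ≤ 2 ^ 29 * Real.exp (3 * c₁ / 8) / c₁ ^ 7 / s := hfinal
end
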